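/- Let ℓ, s be positive integers and T a tree with leaf set R. There exists a constant λ = λ(T, ℓ) such that: if G is a K_{s,s}-free graph and G contains a semi-induced copy of T_R^λ (λ copies of T, each induced in G, agreeing on the images of R and pairwise vertex-disjoint outside R), then among these λ copies there are ℓ copies that together form an induced subgraph of G isomorphic to T_R^ℓ. -/

import Mathlib

open Finset

/-- A graph is `K_{s,s}`-free if it contains no complete bipartite subgraph with
two disjoint parts of size `s`. -/
def KssFree {V : Type*} (s : ℕ) (G : SimpleGraph V) : Prop :=
  ¬ ∃ (A B : Finset V), A.card = s ∧ B.card = s ∧ Disjoint A B ∧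
      ∀ a ∈ A, ∀ b ∈ B, G.Adj a b


lemma my_ramsey_seq {κ : Type} [Fintype κ] [Nonempty κ] {N : ℕ}
    (c : Fin N → Fin N → κ) :
    ∀ (t : ℕ) (A : Finset (Fin N)), (Fintype.card κ + 1) ^ t ≤ A.card →
    ∃ v : Fin t → Fin N, StrictMono v ∧ (∀ i, v i ∈ A) ∧
      ∃ col : Fin t → κ, ∀ i j : Fin t, i < j → c (v i) (v j) = col i := by
  classical
  intro t
  induction t with
  | zero =>
    intro A _
    exact ⟨Fin.elim0, fun i => i.elim0, fun i => i.elim0, Fin.elim0, fun i => i.elim0⟩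
  | succ t ih =>
    intro A hA
    set k := Fintype.card κ with hk
    have hk1 : 1 ≤ k := Fintype.card_pos
    have hA0 : A.Nonempty := by
      rw [← Finset.card_pos]
      calc 0 < (k+1)^(t+1) := by positivity
        _ ≤ A.card := hA
    set a := A.min' hA0 with ha
    have haA : a ∈ A := A.min'_mem hA0
    -- find a big color class
    have hbig : ∃ x : κ, (k+1)^t ≤ ((A.erase a).filter (fun b => c a b = x)).card := by
      by_contra hcon
      push_neg at hcon
      have hsum : (A.erase a).card =
          ∑ x : κ, ((A.erase a).filter (fun b => c a b = x)).card :=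
        Finset.card_eq_sum_card_fiberwise (fun b _ => Finset.mem_univ (c a b))
      have hlt : ∑ x : κ, ((A.erase a).filter (fun b => c a b = x)).card
          < ∑ _x : κ, (k+1)^t := by
        apply Finset.sum_lt_sum_of_nonempty Finset.univ_nonempty
        intro x _
        exact hcon x
      have h1 : (A.erase a).card = A.card - 1 := by
        rw [Finset.card_erase_of_mem haA]
      have h2 : ∑ _x : κ, (k+1)^t = k * (k+1)^t := by
        rw [Finset.sum_const, Finset.card_univ, smul_eq_mul]
      have h3 : (k+1)^(t+1) = k * (k+1)^t + (k+1)^t := by ring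
      have h4 : 1 ≤ (k+1)^t := Nat.one_le_pow _ _ (by omega)
      omega
    obtain ⟨x, hx⟩ := hbig
    set B := (A.erase a).filter (fun b => c a b = x) with hB
    obtain ⟨v', hv'mono, hv'mem, col', hcol'⟩ := ih B hx
    have hBsub : ∀ b ∈ B, b ∈ A.erase a := fun b hb => (Finset.mem_filter.mp hb).1
    have haltB : ∀ b ∈ B, a < b := by
      intro b hb
      have hb' := hBsub b hb
      have hbA : b ∈ A := Finset.mem_of_mem_erase hb'
      have hne : b ≠ a := Finset.ne_of_mem_erase hb'
      exact lt_of_le_of_ne (A.min'_le b hbA) (Ne.symm hne)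
    refine ⟨Fin.cons a v', ?_, ?_, Fin.cons x col', ?_⟩
    · intro i j hij
      rcases Fin.eq_zero_or_eq_succ j with rfl | ⟨j', rfl⟩
      · exact absurd hij (by simp)
      rcases Fin.eq_zero_or_eq_succ i with rfl | ⟨i', rfl⟩
      · simp only [Fin.cons_zero, Fin.cons_succ]
        exact haltB _ (hv'mem j')
      · simp only [Fin.cons_succ]
        exact hv'mono (Fin.succ_lt_succ_iff.mp hij)
    · intro i
      rcases Fin.eq_zero_or_eq_succ i with rfl | ⟨i', rfl⟩
      · simpa using haA
      · simp only [Fin.cons_succ]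
        exact Finset.mem_of_mem_erase (hBsub _ (hv'mem i'))
    · intro i j hij
      rcases Fin.eq_zero_or_eq_succ j with rfl | ⟨j', rfl⟩
      · exact absurd hij (by simp)
      rcases Fin.eq_zero_or_eq_succ i with rfl | ⟨i', rfl⟩
      · simp only [Fin.cons_zero, Fin.cons_succ]
        exact (Finset.mem_filter.mp (hv'mem j')).2
      · simp only [Fin.cons_succ]
        exact hcol' i' j' (Fin.succ_lt_succ_iff.mp hij)

lemma my_ramsey (κ : Type) [Fintype κ] [Nonempty κ] (m : ℕ) :
    ∃ N : ℕ, ∀ c : Fin N → Fin N → κ,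
      ∃ (S : Finset (Fin N)) (col : κ), S.card = m ∧
        ∀ i ∈ S, ∀ j ∈ S, i < j → c i j = col := by
  classical
  set k := Fintype.card κ with hk
  have hk1 : 1 ≤ k := Fintype.card_pos
  set t := k * (m - 1) + 1 with ht
  refine ⟨(k+1)^t, ?_⟩
  intro c
  obtain ⟨v, hmono, _, col, hcol⟩ := my_ramsey_seq c t Finset.univ (by simp; exact le_rfl)
  -- pigeonhole on col
  have hfib : ∃ x : κ, m ≤ ((Finset.univ : Finset (Fin t)).filter (fun i => col i = x)).card := by
    by_contra hcon
    push_neg at hcon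
    have hsum : (Finset.univ : Finset (Fin t)).card =
        ∑ x : κ, ((Finset.univ : Finset (Fin t)).filter (fun i => col i = x)).card :=
      Finset.card_eq_sum_card_fiberwise (fun b _ => Finset.mem_univ (col b))
    have hlt : ∑ x : κ, ((Finset.univ : Finset (Fin t)).filter (fun i => col i = x)).card
        ≤ ∑ _x : κ, (m - 1) := by
      apply Finset.sum_le_sum
      intro x _
      have := hcon x
      omega
    have h2 : ∑ _x : κ, (m-1) = k * (m-1) := by
      rw [Finset.sum_const, Finset.card_univ, smul_eq_mul]
    have h3 : (Finset.univ : Finset (Fin t)).card = t := by simp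
    omega
  obtain ⟨x, hx⟩ := hfib
  obtain ⟨S0, hS0sub, hS0card⟩ := Finset.exists_subset_card_eq hx
  refine ⟨S0.image v, x, ?_, ?_⟩
  · rw [Finset.card_image_of_injective _ hmono.injective, hS0card]
  · intro i hi j hj hij
    obtain ⟨a, haS, rfl⟩ := Finset.mem_image.mp hi
    obtain ⟨b, hbS, rfl⟩ := Finset.mem_image.mp hj
    have hab : a < b := hmono.lt_iff_lt.mp hij
    rw [hcol a b hab]
    exact (Finset.mem_filter.mp (hS0sub haS)).2

theorem stmt_4 {α : Type} [Fintype α] [DecidableEq α] (ℓ s : ℕ) (hℓ : 1 ≤ ℓ) (hs : 1 ≤ s)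
    (T : SimpleGraph α) [DecidableRel T.Adj] (hT : T.IsTree)
    (R : Set α) (hR : ∀ v, v ∈ R ↔ T.degree v = 1) :
    ∃ lam : ℕ, ∀ (V : Type) (_ : Fintype V) (_ : DecidableEq V) (G : SimpleGraph V),
      KssFree s G →
      ∀ f : Fin lam → α → V,
        (∀ i, Function.Injective (f i)) →
        -- each copy is an induced copy of `T` in `G`
        (∀ i u v, G.Adj (f i u) (f i v) ↔ T.Adj u v) →
        -- the copies agree on the images of the roots `R`
        (∀ i j r, r ∈ R → f i r = f j r) →
        -- the copies are pairwise vertex disjoint outside the common image of `R`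
        (∀ i j u v, i ≠ j → f i u = f j v → u ∈ R ∧ v ∈ R ∧ u = v) →
        ∃ S : Finset (Fin lam), S.card = ℓ ∧
          -- the chosen `ℓ` copies form a copy of `T_R^ℓ` that is induced in `G`
          ∀ i ∈ S, ∀ j ∈ S, i ≠ j → ∀ u v, G.Adj (f i u) (f j v) →
            (u ∈ R ∨ v ∈ R) ∧ T.Adj u v := by
  classical
  set m := max ℓ (2 * s) with hm
  obtain ⟨N, hN⟩ := my_ramsey (Option (α × α)) m
  refine ⟨N, ?_⟩
  intro V _ _ G hG f hinj hind hroot hdisj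
  set c : Fin N → Fin N → Option (α × α) := fun i j =>
    if h : ∃ p : α × α, p.1 ∉ R ∧ p.2 ∉ R ∧ G.Adj (f i p.1) (f j p.2)
    then some h.choose else none with hc
  have hgood : ∀ i j, c i j = none → ∀ u v, u ∉ R → v ∉ R → ¬ G.Adj (f i u) (f j v) := by
    intro i j hij u v hu hv hadj
    rw [hc] at hij
    simp only at hij
    rw [dif_pos ⟨(u, v), hu, hv, hadj⟩] at hij
    cases hij
  have hbad : ∀ i j p, c i j = some p → p.1 ∉ R ∧ p.2 ∉ R ∧ G.Adj (f i p.1) (f j p.2) := by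
    intro i j p hij
    rw [hc] at hij
    simp only at hij
    by_cases h : ∃ p : α × α, p.1 ∉ R ∧ p.2 ∉ R ∧ G.Adj (f i p.1) (f j p.2)
    · rw [dif_pos h] at hij
      rw [← Option.some_inj.mp hij]
      exact h.choose_spec
    · rw [dif_neg h] at hij
      cases hij
  obtain ⟨S, col, hcard, hmono⟩ := hN c
  match col with
  | none =>
    obtain ⟨S', hS'sub, hS'card⟩ := Finset.exists_subset_card_eq (hcard ▸ le_max_left ℓ (2*s) : ℓ ≤ S.card)
    refine ⟨S', hS'card, ?_⟩
    intro i hi j hj hij u v hadj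
    have key : u ∈ R ∨ v ∈ R := by
      by_contra hcon
      push_neg at hcon
      obtain ⟨hu, hv⟩ := hcon
      rcases lt_or_gt_of_ne hij with h | h
      · exact hgood i j (hmono i (hS'sub hi) j (hS'sub hj) h) u v hu hv hadj
      · exact hgood j i (hmono j (hS'sub hj) i (hS'sub hi) h) v u hv hu hadj.symm
    refine ⟨key, ?_⟩
    rcases key with hu | hv
    · have heq : f i u = f j u := hroot i j u hu
      rw [heq] at hadj
      exact (hind j u v).mp hadj
    · have heq : f j v = f i v := hroot j i v hv
      rw [heq] at hadj
      exact (hind i u v).mp hadj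
  | some (u, v) =>
    exfalso
    -- get 2s copies pairwise joined by edge (u,v)
    obtain ⟨S₂, hS₂sub, hS₂card⟩ := Finset.exists_subset_card_eq (hcard ▸ le_max_right ℓ (2*s) : 2*s ≤ S.card)
    have hpair : ∀ i ∈ S₂, ∀ j ∈ S₂, i < j →
        u ∉ R ∧ v ∉ R ∧ G.Adj (f i u) (f j v) := by
      intro i hi j hj hij
      exact hbad i j (u, v) (hmono i (hS₂sub hi) j (hS₂sub hj) hij)
    -- S₂ has two elements
    have h2 : 1 < S₂.card := by omega
    obtain ⟨i0, hi0, j0, hj0, hij0⟩ := Finset.one_lt_card.mp h2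
    have huv : u ∉ R ∧ v ∉ R := by
      rcases lt_or_gt_of_ne hij0 with h | h
      · exact ⟨(hpair i0 hi0 j0 hj0 h).1, (hpair i0 hi0 j0 hj0 h).2.1⟩
      · exact ⟨(hpair j0 hj0 i0 hi0 h).1, (hpair j0 hj0 i0 hi0 h).2.1⟩
    -- sort and split
    set L := S₂.sort (· ≤ ·) with hL
    have hLlen : L.length = 2 * s := by rw [hL, Finset.length_sort, hS₂card]
    have hLnodup : L.Nodup := S₂.sort_nodup _
    have hLsorted : L.Pairwise (· < ·) := (S₂.sortedLT_sort).pairwise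
    have hLmem : ∀ a ∈ L, a ∈ S₂ := fun a ha => (Finset.mem_sort _).mp ha
    set I := L.take s with hI
    set J := L.drop s with hJ
    have hIJ : I ++ J = L := List.take_append_drop s L
    have hpairIJ : ∀ a ∈ I, ∀ b ∈ J, a < b := by
      have := hLsorted
      rw [← hIJ, List.pairwise_append] at this
      exact this.2.2
    have hImem : ∀ a ∈ I, a ∈ S₂ := fun a ha => hLmem a (List.mem_of_mem_take ha)
    have hJmem : ∀ a ∈ J, a ∈ S₂ := fun a ha => hLmem a (List.mem_of_mem_drop ha)
    have hInodup : I.Nodup := hLnodup.sublist (List.take_sublist _ _)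
    have hJnodup : J.Nodup := hLnodup.sublist (List.drop_sublist _ _)
    have hIlen : I.length = s := by
      rw [hI, List.length_take, hLlen]; omega
    have hJlen : J.length = s := by
      rw [hJ, List.length_drop, hLlen]; omega
    -- build the K_{s,s}
    refine hG ⟨I.toFinset.image (fun i => f i u), J.toFinset.image (fun j => f j v),
      ?_, ?_, ?_, ?_⟩
    · rw [Finset.card_image_of_injOn, List.toFinset_card_of_nodup hInodup, hIlen]
      intro a _ b _ hab
      by_contra hne
      exact huv.1 (hdisj a b u u hne hab).1
    · rw [Finset.card_image_of_injOn, List.toFinset_card_of_nodup hJnodup, hJlen]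
      intro a _ b _ hab
      by_contra hne
      exact huv.2 (hdisj a b v v hne hab).1
    · rw [Finset.disjoint_left]
      intro x hx hx'
      obtain ⟨a, ha, rfl⟩ := Finset.mem_image.mp hx
      obtain ⟨b, hb, hba⟩ := Finset.mem_image.mp hx'
      have hab : a < b := hpairIJ a (List.mem_toFinset.mp ha) b (List.mem_toFinset.mp hb)
      exact huv.1 (hdisj a b u v (ne_of_lt hab) hba.symm).1
    · intro x hx y hy
      obtain ⟨a, ha, rfl⟩ := Finset.mem_image.mp hx
      obtain ⟨b, hb, rfl⟩ := Finset.mem_image.mp hy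
      have hab : a < b := hpairIJ a (List.mem_toFinset.mp ha) b (List.mem_toFinset.mp hb)
      exact (hpair a (hImem a (List.mem_toFinset.mp ha)) b (hJmem b (List.mem_toFinset.mp hb)) hab).2.2
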